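/- Let Ω be a finite nonempty set and μ a probability distribution on Ω. Let Q = {q_1, …, q_k} be a finite set of pairwise distinct probability distributions on Ω and let x be a probability distribution on Q. Then the following are equivalent: (i) there exist probability distributions ψ^ω on {1,…,k}, one for each ω ∈ Ω, such that setting P(ω,i) = μ(ω)·ψ^ω(i), one has ∑_ω P(ω,i) = x(q_i) and P(ω,i) = x(q_i)·q_i(ω) for all ω and i (i.e., (Q,x) is the distribution over Bayesian posteriors of a signal correlated with ω); (ii) ∑_{i=1}^{k} x(q_i)·q_i(ω) = μ(ω) for every ω ∈ Ω. -/

import Mathlib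

open Finset

noncomputable section

/-- `p` is a probability distribution on the finite set `Ω`. -/
def IsDist {Ω : Type*} [Fintype Ω] (p : Ω → ℝ) : Prop :=
  (∀ ω, 0 ≤ p ω) ∧ ∑ ω, p ω = 1

/-- A pair `(Q, x)` consisting of a finite set of pairwise distinct
posteriors `q_1, …, q_k` and a distribution `x` over them is the distribution over Bayesian
posteriors of some signal correlated with `ω ∼ μ` (i.e. there are conditional signal
distributions `ψ^ω` with `P(ω,i) = μ(ω)·ψ^ω(i)` satisfying `∑_ω P(ω,i) = x(q_i)` and
`P(ω,i) = x(q_i)·q_i(ω)`) if and only if `∑_i x(q_i)·q_i(ω) = μ(ω)` for every `ω`. -/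
theorem posterior_feasibility
    {Ω : Type*} [Fintype Ω] [Nonempty Ω]
    (μ : Ω → ℝ) (hμ : IsDist μ)
    (k : ℕ) (q : Fin k → Ω → ℝ) (hq : ∀ i, IsDist (q i))
    (hdistinct : Function.Injective q)
    (x : Fin k → ℝ) (hx0 : ∀ i, 0 ≤ x i) (hx1 : ∑ i, x i = 1) :
    (∃ ψ : Ω → Fin k → ℝ,
        (∀ ω, (∀ i, 0 ≤ ψ ω i) ∧ ∑ i, ψ ω i = 1) ∧
        (∀ i, ∑ ω, μ ω * ψ ω i = x i) ∧
        (∀ ω i, μ ω * ψ ω i = x i * q i ω)) ↔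
      (∀ ω, ∑ i, x i * q i ω = μ ω) := by
  constructor
  · rintro ⟨ψ, hψ, _, hP⟩ ω
    calc ∑ i, x i * q i ω = ∑ i, μ ω * ψ ω i := by simp_rw [hP]
    _ = μ ω * ∑ i, ψ ω i := (Finset.mul_sum _ _ _).symm
    _ = μ ω := by rw [(hψ ω).2, mul_one]
  · intro h
    refine ⟨fun ω i => if μ ω = 0 then x i else x i * q i ω / μ ω, ?_, ?_, ?_⟩
    · intro ω
      by_cases h0 : μ ω = 0
      · simp [h0, hx0, hx1]
      · simp only [h0, if_false]
        constructor
        · intro i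
          exact div_nonneg (mul_nonneg (hx0 i) ((hq i).1 ω)) (hμ.1 ω)
        · rw [← Finset.sum_div, h ω, div_self h0]
    all_goals
      have key : ∀ ω i, μ ω * (if μ ω = 0 then x i else x i * q i ω / μ ω) = x i * q i ω := by
        intro ω i
        by_cases h0 : μ ω = 0
        · simp only [h0, if_true, zero_mul]
          have hnn : ∀ j ∈ Finset.univ, 0 ≤ x j * q j ω := fun j _ =>
            mul_nonneg (hx0 j) ((hq j).1 ω)
          have := (Finset.sum_eq_zero_iff_of_nonneg hnn).mp (by rw [h ω, h0]) i (Finset.mem_univ i)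
          exact this.symm
        · rw [if_neg h0]
          field_simp [h0]
    · intro i
      simp_rw [key]
      rw [← Finset.mul_sum, (hq i).2, mul_one]
    · exact key

end
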